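/- Let N ≥ 2 and take indices in ℤ/Nℤ. Define H_1(x,p) = (1/2) Σ_{k=1}^N p_k² + Σ_{k=1}^N e^{x_{k+1} − x_k} and H_2(x,p) = (1/3) Σ_{k=1}^N p_k³ + Σ_{k=1}^N e^{x_{k+1} − x_k}(p_{k+1} + p_k) on ℝ^N × ℝ^N. Then the canonical Poisson bracket of H_1 and H_2 vanishes identically: {H_1, H_2}(x,p) = 0 for all (x,p) ∈ ℝ^N × ℝ^N. -/

import Mathlib

noncomputable section

/-- Partial derivative `∂H/∂x_k` of a function `H(x,p)` on phase space. -/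
def pX {N : ℕ} [NeZero N] (H : (ZMod N → ℝ) → (ZMod N → ℝ) → ℝ)
    (x p : ZMod N → ℝ) (k : ZMod N) : ℝ :=
  fderiv ℝ (fun x' => H x' p) x (Pi.single k 1)

/-- Partial derivative `∂H/∂p_k` of a function `H(x,p)` on phase space. -/
def pP {N : ℕ} [NeZero N] (H : (ZMod N → ℝ) → (ZMod N → ℝ) → ℝ)
    (x p : ZMod N → ℝ) (k : ZMod N) : ℝ :=
  fderiv ℝ (fun p' => H x p') p (Pi.single k 1)

/-- The Toda Hamilton function `H₁(x,p) = ½ Σ p_k² + Σ e^{x_{k+1}−x_k}`. -/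
def H1 {N : ℕ} [NeZero N] (x p : ZMod N → ℝ) : ℝ :=
  (1 / 2) * ∑ k, (p k) ^ 2 + ∑ k, Real.exp (x (k + 1) - x k)

/-- The second Toda Hamilton function
`H₂(x,p) = ⅓ Σ p_k³ + Σ e^{x_{k+1}−x_k}(p_{k+1}+p_k)`. -/
def H2 {N : ℕ} [NeZero N] (x p : ZMod N → ℝ) : ℝ :=
  (1 / 3) * ∑ k, (p k) ^ 3 + ∑ k, Real.exp (x (k + 1) - x k) * (p (k + 1) + p k)

/-- The canonical Poisson bracket
`{F,G}(x,p) = Σ_k (∂F/∂x_k ∂G/∂p_k − ∂F/∂p_k ∂G/∂x_k)`. -/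
def poisson {N : ℕ} [NeZero N] (F G : (ZMod N → ℝ) → (ZMod N → ℝ) → ℝ)
    (x p : ZMod N → ℝ) : ℝ :=
  ∑ k, (pX F x p k * pP G x p k - pP F x p k * pX G x p k)

open ContinuousLinearMap


/-- `A x j = e^{x_{j+1} - x_j}`. -/
def Av {N : ℕ} [NeZero N] (x : ZMod N → ℝ) (j : ZMod N) : ℝ :=
  Real.exp (x (j + 1) - x j)

lemma sum_if_shift {N : ℕ} [NeZero N] (f : ZMod N → ℝ) (k : ZMod N) :
    ∑ j, (if j + 1 = k then f j else 0) = f (k - 1) := by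
  have h : ∀ j : ZMod N, (j + 1 = k) = (j = k - 1) := fun j =>
    propext (eq_sub_iff_add_eq).symm
  simp only [h]
  simp

lemma sum_if_id {N : ℕ} [NeZero N] (f : ZMod N → ℝ) (k : ZMod N) :
    ∑ j, (if j = k then f j else 0) = f k := by simp

lemma hasFDerivAt_expterm {N : ℕ} [NeZero N] (x : ZMod N → ℝ) (j : ZMod N) :
    HasFDerivAt (fun x' : ZMod N → ℝ => Real.exp (x' (j+1) - x' j))
      (Av x j • ((proj (j+1) : (ZMod N → ℝ) →L[ℝ] ℝ) - proj j)) x :=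
  (Real.hasDerivAt_exp _).comp_hasFDerivAt x
    ((proj (j+1) : (ZMod N → ℝ) →L[ℝ] ℝ).hasFDerivAt.sub
      (proj j : (ZMod N → ℝ) →L[ℝ] ℝ).hasFDerivAt)

lemma pX_H1 {N : ℕ} [NeZero N] (x p : ZMod N → ℝ) (k : ZMod N) :
    pX H1 x p k = Av x (k - 1) - Av x k := by
  have hd : HasFDerivAt (fun x' : ZMod N → ℝ => H1 x' p)
      ((0 : (ZMod N → ℝ) →L[ℝ] ℝ) + ∑ j : ZMod N,
        Av x j • ((proj (j+1) : (ZMod N → ℝ) →L[ℝ] ℝ) - proj j)) x := by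
    simp only [H1]
    exact (hasFDerivAt_const _ _).add
      (HasFDerivAt.fun_sum (fun j _ => hasFDerivAt_expterm x j))
  rw [pX, hd.fderiv]
  simp only [ContinuousLinearMap.add_apply, ContinuousLinearMap.zero_apply,
    ContinuousLinearMap.sum_apply, ContinuousLinearMap.smul_apply,
    ContinuousLinearMap.sub_apply, proj_apply, Pi.single_apply, smul_eq_mul,
    mul_sub, mul_ite, mul_one, mul_zero, Finset.sum_sub_distrib]
  rw [sum_if_shift (fun j => Av x j) k, sum_if_id (fun j => Av x j) k, zero_add]

lemma pP_H1 {N : ℕ} [NeZero N] (x p : ZMod N → ℝ) (k : ZMod N) :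
    pP H1 x p k = p k := by
  have hd : HasFDerivAt (fun p' : ZMod N → ℝ => H1 x p')
      ((1/2 : ℝ) • (∑ j : ZMod N,
        (((2 : ℕ) : ℝ) * p j ^ (2 - 1)) • (proj j : (ZMod N → ℝ) →L[ℝ] ℝ)) +
        (0 : (ZMod N → ℝ) →L[ℝ] ℝ)) p := by
    simp only [H1]
    exact ((HasFDerivAt.fun_sum (fun j _ =>
      (hasDerivAt_pow 2 (p j)).comp_hasFDerivAt p
        (proj j : (ZMod N → ℝ) →L[ℝ] ℝ).hasFDerivAt)).const_mul (1/2 : ℝ)).add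
      (hasFDerivAt_const _ _)
  rw [pP, hd.fderiv]
  simp only [ContinuousLinearMap.add_apply, ContinuousLinearMap.zero_apply,
    ContinuousLinearMap.smul_apply, ContinuousLinearMap.sum_apply, proj_apply,
    Pi.single_apply, smul_eq_mul, mul_ite, mul_one, mul_zero, add_zero]
  rw [sum_if_id (fun j => ((2:ℕ):ℝ) * p j ^ (2-1)) k]
  push_cast
  ring

lemma pX_H2 {N : ℕ} [NeZero N] (x p : ZMod N → ℝ) (k : ZMod N) :
    pX H2 x p k = Av x (k - 1) * (p k + p (k - 1)) - Av x k * (p (k + 1) + p k) := by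
  have hd : HasFDerivAt (fun x' : ZMod N → ℝ => H2 x' p)
      ((0 : (ZMod N → ℝ) →L[ℝ] ℝ) + ∑ j : ZMod N,
        (p (j+1) + p j) • (Av x j • ((proj (j+1) : (ZMod N → ℝ) →L[ℝ] ℝ) - proj j))) x := by
    simp only [H2]
    exact (hasFDerivAt_const _ _).add
      (HasFDerivAt.fun_sum (fun j _ => (hasFDerivAt_expterm x j).mul_const _))
  rw [pX, hd.fderiv]
  simp only [ContinuousLinearMap.add_apply, ContinuousLinearMap.zero_apply,
    ContinuousLinearMap.sum_apply, ContinuousLinearMap.smul_apply,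
    ContinuousLinearMap.sub_apply, proj_apply, Pi.single_apply, smul_eq_mul,
    mul_sub, mul_ite, mul_one, mul_zero, Finset.sum_sub_distrib]
  rw [sum_if_shift (fun j => (p (j+1) + p j) * Av x j) k,
    sum_if_id (fun j => (p (j+1) + p j) * Av x j) k, zero_add]
  have : k - 1 + 1 = k := sub_add_cancel k 1
  rw [this]
  ring

lemma pP_H2 {N : ℕ} [NeZero N] (x p : ZMod N → ℝ) (k : ZMod N) :
    pP H2 x p k = p k ^ 2 + (Av x (k - 1) + Av x k) := by
  have hd : HasFDerivAt (fun p' : ZMod N → ℝ => H2 x p')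
      ((1/3 : ℝ) • (∑ j : ZMod N,
        (((3 : ℕ) : ℝ) * p j ^ (3 - 1)) • (proj j : (ZMod N → ℝ) →L[ℝ] ℝ)) +
        ∑ j : ZMod N, Av x j •
          ((proj (j+1) : (ZMod N → ℝ) →L[ℝ] ℝ) + proj j)) p := by
    simp only [H2]
    exact ((HasFDerivAt.fun_sum (fun j _ =>
      (hasDerivAt_pow 3 (p j)).comp_hasFDerivAt p
        (proj j : (ZMod N → ℝ) →L[ℝ] ℝ).hasFDerivAt)).const_mul (1/3 : ℝ)).add
      (HasFDerivAt.fun_sum (fun j _ =>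
        (((proj (j+1) : (ZMod N → ℝ) →L[ℝ] ℝ).hasFDerivAt.add
          (proj j : (ZMod N → ℝ) →L[ℝ] ℝ).hasFDerivAt).const_mul (Av x j))))
  rw [pP, hd.fderiv]
  simp only [ContinuousLinearMap.add_apply, ContinuousLinearMap.smul_apply,
    ContinuousLinearMap.sum_apply, proj_apply, Pi.single_apply, smul_eq_mul,
    mul_ite, mul_one, mul_zero, mul_add, Finset.sum_add_distrib]
  rw [sum_if_id (fun j => ((3:ℕ):ℝ) * p j ^ (3-1)) k,
    sum_if_shift (fun j => Av x j) k, sum_if_id (fun j => Av x j) k]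
  ring

/-- The Toda Hamilton functions `H₁` and `H₂` are in involution: their
canonical Poisson bracket vanishes identically. -/
theorem toda_hamiltonians_in_involution (N : ℕ) [NeZero N] (hN : 2 ≤ N) :
    ∀ x p : ZMod N → ℝ, poisson H1 H2 x p = 0 := by
  intro x p
  rw [poisson]
  simp only [pX_H1, pP_H1, pX_H2, pP_H2]
  have t1 : ∑ k : ZMod N, Av x (k - 1) ^ 2 = ∑ k : ZMod N, Av x k ^ 2 :=
    Fintype.sum_equiv (Equiv.subRight (1 : ZMod N)) _ _ (fun k => rfl)
  have t2 : ∑ k : ZMod N, Av x (k - 1) * p (k - 1) * p k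
      = ∑ k : ZMod N, Av x k * p k * p (k + 1) := by
    apply Fintype.sum_equiv (Equiv.subRight (1 : ZMod N))
    intro k
    simp [Equiv.subRight, sub_add_cancel]
  calc ∑ k : ZMod N, ((Av x (k-1) - Av x k) * (p k ^ 2 + (Av x (k-1) + Av x k))
        - p k * (Av x (k-1) * (p k + p (k-1)) - Av x k * (p (k+1) + p k)))
      = ∑ k : ZMod N, ((Av x (k-1) ^ 2 + Av x k * p k * p (k+1))
        - (Av x k ^ 2 + Av x (k-1) * p (k-1) * p k)) := by
        apply Finset.sum_congr rfl; intro k _; ring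
    _ = 0 := by
        rw [Finset.sum_sub_distrib, Finset.sum_add_distrib, Finset.sum_add_distrib,
          t1, t2]
        ring
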